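/- In a Coxeter group W with Coxeter system (W, S), if the interval [v, w] in the right weak order is a Boolean interval, then supp(v⁻¹w) ∩ Des(v) = ∅, where supp(u) is the set of generators appearing in some (equivalently, any) reduced word for u. -/

import Mathlib

/-- The right weak order on a Coxeter group: `u ≤ w` iff `ℓ(u) + ℓ(u⁻¹w) = ℓ(w)`. -/
def weakLE {B W : Type*} [Group W] {M : CoxeterMatrix B} (cs : CoxeterSystem M W)
    (u w : W) : Prop :=
  cs.length u + cs.length (u⁻¹ * w) = cs.length w

/-- The interval `[v, w]` in the right weak order is Boolean of rank `k`: it is order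
isomorphic to the lattice of subsets of a `k`-element set, ordered by inclusion. -/
def IsBooleanInterval {B W : Type*} [Group W] {M : CoxeterMatrix B} (cs : CoxeterSystem M W)
    (k : ℕ) (v w : W) : Prop :=
  weakLE cs v w ∧
    ∃ f : {x : W // weakLE cs v x ∧ weakLE cs x w} ≃ Finset (Fin k),
      ∀ a b, weakLE cs a.1 b.1 ↔ f a ⊆ f b

set_option linter.dupNamespace false
set_option linter.unusedVariables false

open List

namespace CoxAux



lemma z2_add_self (c : ZMod 2) : c + c = 0 := by revert c; decide

section GroupHelper

variable {G : Type*} [Group G]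

lemma conj_cancel {a : G} (ha : a * a = 1) (t : G) : a * (a * t * a) * a = t := by
  have h : a * (a * t * a) * a = a * a * t * (a * a) := by simp [mul_assoc]
  rw [h, ha, one_mul, mul_one]

lemma conj_simple_eq_iff {a : G} (ha : a * a = 1) (t z : G) :
    (a * t * a = z) ↔ (t = a * z * a) := by
  constructor
  · rintro rfl; rw [conj_cancel ha]
  · rintro rfl; rw [conj_cancel ha]

lemma conj_step' {a x : G} (ha : a * a = 1) (hax : a * x * a = x⁻¹) :
    a * x⁻¹ = x * a := by
  rw [← hax, ← mul_assoc, ← mul_assoc, ha, one_mul]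

lemma conj_pow_shift {a x : G} (ha : a * a = 1) (hax : a * x * a = x⁻¹) (r : ℕ) :
    x * ((x⁻¹) ^ (r + 1 + 1) * a) * x⁻¹ = (x⁻¹) ^ r * a := by
  have h1 : x * (x⁻¹) ^ (r + 1 + 1) = (x⁻¹) ^ (r + 1) := by
    rw [pow_succ' x⁻¹ (r + 1), ← mul_assoc, mul_inv_cancel, one_mul]
  have h2 : a * x⁻¹ = x * a := conj_step' ha hax
  calc x * ((x⁻¹) ^ (r + 1 + 1) * a) * x⁻¹
      = (x * (x⁻¹) ^ (r + 1 + 1)) * (a * x⁻¹) := by simp [mul_assoc]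
    _ = (x⁻¹) ^ (r + 1) * (x * a) := by rw [h1, h2]
    _ = (x⁻¹) ^ r * a := by
        rw [pow_succ x⁻¹ r, mul_assoc, inv_mul_cancel_left]

lemma conj_eq_iff {x t z : G} : x * t * x⁻¹ = z ↔ t = x⁻¹ * z * x := by
  constructor
  · rintro rfl; simp [mul_assoc]
  · rintro rfl; simp [mul_assoc]

end GroupHelper

lemma sum_range_two_mul_succ {Mo : Type*} [AddCommMonoid Mo] (f : ℕ → Mo) (n : ℕ) :
    ∑ r ∈ Finset.range (2 * (n + 1)), f r
      = (f 0 + f 1) + ∑ r ∈ Finset.range (2 * n), f (r + 1 + 1) := by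
  have h : 2 * (n + 1) = 2 * n + 1 + 1 := by ring
  rw [h, Finset.sum_range_succ', Finset.sum_range_succ']
  have e1 : (0 : ℕ) + 1 = 1 := rfl
  rw [e1]
  abel

noncomputable section
open Classical

variable {B W : Type*} [Group W] {M : CoxeterMatrix B} (cs : CoxeterSystem M W)

/-- The function underlying the Tits reflection-permutation representation. -/
def sigFun (i : B) : W × ZMod 2 → W × ZMod 2 :=
  fun p => (cs.simple i * p.1 * cs.simple i,
    p.2 + if p.1 = cs.simple i then 1 else 0)

lemma sigFun_involutive (i : B) : Function.Involutive (sigFun cs i) := by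
  rintro ⟨t, ε⟩
  have ha : cs.simple i * cs.simple i = 1 := cs.simple_mul_simple_self i
  simp only [sigFun]
  rw [Prod.mk.injEq]
  constructor
  · exact conj_cancel ha t
  · simp only [conj_simple_eq_iff ha]
    have h : cs.simple i * cs.simple i * cs.simple i = cs.simple i := by
      rw [ha, one_mul]
    rw [h]
    by_cases h' : t = cs.simple i <;>
      simp [h', add_assoc, z2_add_self]

/-- The Tits permutation associated to a simple generator. -/
def sig (i : B) : Equiv.Perm (W × ZMod 2) :=
  (sigFun_involutive cs i).toPerm

lemma sig_apply (i : B) (t : W) (ε : ZMod 2) :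
    sig cs i (t, ε) = (cs.simple i * t * cs.simple i,
      ε + if t = cs.simple i then 1 else 0) := rfl

lemma sig_mul_pow (i j : B) (n : ℕ) (t : W) (ε : ZMod 2) :
    ((sig cs i * sig cs j) ^ n) (t, ε) =
      ((cs.simple i * cs.simple j) ^ n * t * ((cs.simple i * cs.simple j)⁻¹) ^ n,
        ε + ∑ r ∈ Finset.range (2 * n),
          if t = ((cs.simple i * cs.simple j)⁻¹) ^ r * cs.simple j then 1 else 0) := by
  set p := cs.simple i * cs.simple j with hp
  have ha : cs.simple j * cs.simple j = 1 := cs.simple_mul_simple_self j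
  have hax : cs.simple j * p * cs.simple j = p⁻¹ := by
    rw [hp, mul_inv_rev, cs.inv_simple, cs.inv_simple]
    simp [mul_assoc]
  induction n generalizing t ε with
  | zero => simp
  | succ n ih =>
    rw [pow_succ, Equiv.Perm.mul_apply]
    have hτ : (sig cs i * sig cs j) (t, ε) =
        (p * t * p⁻¹, ε + ((if t = (p⁻¹) ^ 0 * cs.simple j then 1 else 0) +
          if t = (p⁻¹) ^ 1 * cs.simple j then 1 else 0)) := by
      rw [Equiv.Perm.mul_apply, sig_apply, sig_apply]
      have e1 : cs.simple i * (cs.simple j * t * cs.simple j) * cs.simple i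
          = p * t * p⁻¹ := by
        rw [hp, mul_inv_rev, cs.inv_simple, cs.inv_simple]
        simp [mul_assoc]
      have e2 : (cs.simple j * t * cs.simple j = cs.simple i) ↔
          (t = (p⁻¹) ^ 1 * cs.simple j) := by
        rw [conj_simple_eq_iff ha, pow_one, hp, mul_inv_rev, cs.inv_simple,
          cs.inv_simple, mul_assoc]
      have e3 : (t = cs.simple j) ↔ (t = (p⁻¹) ^ 0 * cs.simple j) := by
        rw [pow_zero, one_mul]
      rw [e1, Prod.mk.injEq]
      refine ⟨rfl, ?_⟩
      simp only [← e3, e2]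
      rw [add_assoc]
    rw [hτ, ih]
    have hshift : ∀ r : ℕ, (p * t * p⁻¹ = (p⁻¹) ^ r * cs.simple j) ↔
        (t = (p⁻¹) ^ (r + 1 + 1) * cs.simple j) := by
      intro r
      rw [conj_eq_iff]
      have h := conj_pow_shift ha hax r
      constructor
      · intro hh
        rw [hh]
        rw [← h]
        simp [mul_assoc]
      · intro hh
        rw [hh, ← h]
        simp [mul_assoc]
    rw [Prod.mk.injEq]
    constructor
    · rw [pow_succ p n, pow_succ' (p⁻¹) n]
      simp [mul_assoc]
    · have hsum : (∑ r ∈ Finset.range (2 * n),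
          if p * t * p⁻¹ = (p⁻¹) ^ r * cs.simple j then (1 : ZMod 2) else 0)
          = ∑ r ∈ Finset.range (2 * n),
            if t = (p⁻¹) ^ (r + 1 + 1) * cs.simple j then (1 : ZMod 2) else 0 := by
        refine Finset.sum_congr rfl fun r _ => ?_
        exact if_congr (hshift r) rfl rfl
      rw [hsum, sum_range_two_mul_succ
        (fun r => if t = (p⁻¹) ^ r * cs.simple j then (1 : ZMod 2) else 0) n]
      abel

end

noncomputable section
open Classical

variable {B W : Type*} [Group W] {M : CoxeterMatrix B} (cs : CoxeterSystem M W)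

lemma sig_liftable : M.IsLiftable (fun i => sig cs i) := by
  intro i j
  apply Equiv.ext
  rintro ⟨t, ε⟩
  rw [sig_mul_pow]
  have h1 : (cs.simple i * cs.simple j) ^ M i j = 1 := cs.simple_mul_simple_pow i j
  have h1' : ((cs.simple i * cs.simple j)⁻¹) ^ M i j = 1 := by
    rw [inv_pow, h1, inv_one]
  have h2 : ∀ r : ℕ, ((cs.simple i * cs.simple j)⁻¹) ^ (M i j + r)
      = ((cs.simple i * cs.simple j)⁻¹) ^ r := by
    intro r
    rw [pow_add, h1', one_mul]
  have h3 : (∑ r ∈ Finset.range (2 * M i j),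
      if t = ((cs.simple i * cs.simple j)⁻¹) ^ r * cs.simple j then (1 : ZMod 2) else 0) = 0 := by
    have hsplit : 2 * M i j = M i j + M i j := by ring
    rw [hsplit, Finset.sum_range_add]
    have : (∑ r ∈ Finset.range (M i j),
        if t = ((cs.simple i * cs.simple j)⁻¹) ^ (M i j + r) * cs.simple j
          then (1 : ZMod 2) else 0)
        = ∑ r ∈ Finset.range (M i j),
          if t = ((cs.simple i * cs.simple j)⁻¹) ^ r * cs.simple j then (1 : ZMod 2) else 0 := by
      refine Finset.sum_congr rfl fun r _ => ?_
      rw [h2 r]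
    rw [this, z2_add_self]
  rw [h1, h1', h3, add_zero, one_mul, mul_one]
  rfl

/-- The Tits permutation representation of the Coxeter group. -/
def theta : W →* Equiv.Perm (W × ZMod 2) :=
  cs.lift ⟨fun i => sig cs i, sig_liftable cs⟩

lemma theta_simple (i : B) : theta cs (cs.simple i) = sig cs i :=
  cs.lift_apply_simple (sig_liftable cs) i

/-- Parity count of `t` in the right inversion sequence. -/
def invCount (ω : List B) (t : W) : ZMod 2 :=
  ((cs.rightInvSeq ω).map (fun x => if t = x then (1 : ZMod 2) else 0)).sum

lemma invCount_nil (t : W) : invCount cs [] t = 0 := rfl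

lemma invCount_eq_zero_of_not_mem {ω : List B} {t : W} (h : t ∉ cs.rightInvSeq ω) :
    invCount cs ω t = 0 := by
  apply List.sum_eq_zero
  intro x hx
  rw [List.mem_map] at hx
  obtain ⟨y, hy, rfl⟩ := hx
  have : t ≠ y := fun hh => h (hh ▸ hy)
  simp [this]

lemma theta_wordProd (ω : List B) (t : W) (ε : ZMod 2) :
    theta cs (cs.wordProd ω) (t, ε) =
      (cs.wordProd ω * t * (cs.wordProd ω)⁻¹, ε + invCount cs ω t) := by
  induction ω generalizing ε with
  | nil => simp [invCount_nil]
  | cons i ω ih =>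
    rw [cs.wordProd_cons, map_mul, Equiv.Perm.mul_apply, ih, theta_simple, sig_apply]
    rw [Prod.mk.injEq]
    constructor
    · rw [mul_inv_rev, cs.inv_simple]
      simp [mul_assoc]
    · have hcond : (cs.wordProd ω * t * (cs.wordProd ω)⁻¹ = cs.simple i) ↔
          (t = (cs.wordProd ω)⁻¹ * cs.simple i * cs.wordProd ω) := by
        rw [conj_eq_iff]
      have hris : invCount cs (i :: ω) t
          = invCount cs ω t +
            if t = (cs.wordProd ω)⁻¹ * cs.simple i * cs.wordProd ω then 1 else 0 := by
        show ((cs.rightInvSeq (i :: ω)).map _).sum = _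
        have : cs.rightInvSeq (i :: ω)
            = ((cs.wordProd ω)⁻¹ * cs.simple i * cs.wordProd ω) :: cs.rightInvSeq ω := rfl
        rw [this, List.map_cons, List.sum_cons]
        rw [add_comm]
        rfl
      rw [hris, hcond, add_assoc]

/-- The parity cocycle. -/
def nn (w t : W) : ZMod 2 := (theta cs w (t, 0)).2

lemma theta_apply (w t : W) (ε : ZMod 2) :
    theta cs w (t, ε) = (w * t * w⁻¹, ε + nn cs w t) := by
  obtain ⟨ω, rfl⟩ := cs.wordProd_surjective w
  rw [theta_wordProd]
  have : nn cs (cs.wordProd ω) t = invCount cs ω t := by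
    show (theta cs (cs.wordProd ω) (t, 0)).2 = _
    rw [theta_wordProd]
    show 0 + invCount cs ω t = _
    rw [zero_add]
  rw [this]

lemma nn_wordProd (ω : List B) (t : W) : nn cs (cs.wordProd ω) t = invCount cs ω t := by
  show (theta cs (cs.wordProd ω) (t, 0)).2 = _
  rw [theta_wordProd]
  show 0 + invCount cs ω t = _
  rw [zero_add]

lemma nn_mul (a b t : W) : nn cs (a * b) t = nn cs b t + nn cs a (b * t * b⁻¹) := by
  show (theta cs (a * b) (t, 0)).2 = _
  rw [map_mul, Equiv.Perm.mul_apply, theta_apply, theta_apply]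
  show 0 + nn cs b t + nn cs a (b * t * b⁻¹) = _
  rw [zero_add]

lemma nn_simple (i : B) (t : W) :
    nn cs (cs.simple i) t = if t = cs.simple i then 1 else 0 := by
  show (theta cs (cs.simple i) (t, 0)).2 = _
  rw [theta_simple, sig_apply]
  show 0 + _ = _
  rw [zero_add]

lemma nn_one (t : W) : nn cs 1 t = 0 := by
  show (theta cs 1 (t, 0)).2 = 0
  rw [map_one]
  rfl

lemma nn_reflection_self {t : W} (ht : cs.IsReflection t) : nn cs t t = 1 := by
  obtain ⟨g, c, rfl⟩ := ht
  set t := g * cs.simple c * g⁻¹ with hT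
  have hbt : (cs.simple c * g⁻¹) * t * (cs.simple c * g⁻¹)⁻¹ = cs.simple c := by
    rw [hT]
    rw [mul_inv_rev, cs.inv_simple, inv_inv]
    simp [mul_assoc]
  have hg : g⁻¹ * t * (g⁻¹)⁻¹ = cs.simple c := by
    rw [hT, inv_inv]
    simp [mul_assoc]
  have h1 : nn cs t t = nn cs (cs.simple c * g⁻¹) t + nn cs g (cs.simple c) := by
    have : t = g * (cs.simple c * g⁻¹) := by rw [hT, mul_assoc]
    nth_rewrite 1 [this]
    rw [nn_mul, hbt]
  have h2 : nn cs (cs.simple c * g⁻¹) t = nn cs g⁻¹ t + 1 := by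
    rw [nn_mul, hg, nn_simple]
    simp
  have h3 : nn cs g⁻¹ t + nn cs g (cs.simple c) = 0 := by
    have := nn_mul cs g g⁻¹ t
    rw [mul_inv_cancel, nn_one, hg] at this
    exact this.symm
  rw [h1, h2]
  have : nn cs g⁻¹ t + 1 + nn cs g (cs.simple c)
      = (nn cs g⁻¹ t + nn cs g (cs.simple c)) + 1 := by ring
  rw [this, h3, zero_add]

/-- **Strong exchange** (membership form). -/
theorem mem_rightInvSeq_of_isRightInversion {ω : List B} {t : W}
    (ht : cs.IsRightInversion (cs.wordProd ω) t) : t ∈ cs.rightInvSeq ω := by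
  by_contra hmem
  have h0 : nn cs (cs.wordProd ω) t = 0 := by
    rw [nn_wordProd]
    exact invCount_eq_zero_of_not_mem cs hmem
  set w := cs.wordProd ω with hw
  set x := w * t with hx
  have hxt : x * t = w := by
    rw [hx, mul_assoc, ht.1.mul_self, mul_one]
  have h1 : nn cs w t = nn cs t t + nn cs x (t * t * t⁻¹) := by
    rw [← hxt, nn_mul]
  rw [ht.1.mul_self, one_mul, ht.1.inv, nn_reflection_self cs ht.1, h0] at h1
  have h2 : nn cs x t = 1 := by
    have : (1 : ZMod 2) + (1 + nn cs x t) = 1 + 0 := by rw [← h1]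
    rw [← add_assoc, z2_add_self, zero_add, add_zero] at this
    exact this
  obtain ⟨ω', hω', hxw⟩ := cs.exists_reduced_word' x
  have h3 : t ∈ cs.rightInvSeq ω' := by
    by_contra hmem'
    rw [hxw, nn_wordProd, invCount_eq_zero_of_not_mem cs hmem'] at h2
    exact one_ne_zero h2.symm
  have h4 : cs.IsRightInversion x t := by
    rw [hxw]
    exact cs.isRightInversion_of_mem_rightInvSeq hω' h3
  have h5 : cs.length w < cs.length x := by
    have := h4.2
    rw [hxt] at this
    exact this
  have h6 : cs.length x < cs.length w := by
    rw [hx]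
    exact ht.2
  omega
end

noncomputable section
open Classical List
variable {B W : Type*} [Group W] {M : CoxeterMatrix B} (cs : CoxeterSystem M W)

/-- Exchange property, eraseIdx form, for an arbitrary word. -/
theorem exists_eraseIdx_of_isRightInversion (ω : List B) {t : W}
    (ht : cs.IsRightInversion (cs.wordProd ω) t) :
    ∃ l < ω.length, cs.wordProd ω * t = cs.wordProd (ω.eraseIdx l) := by
  have hmem : t ∈ cs.rightInvSeq ω := mem_rightInvSeq_of_isRightInversion cs ht
  obtain ⟨l, hl, hget⟩ := List.mem_iff_getElem.mp hmem
  rw [cs.length_rightInvSeq] at hl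
  refine ⟨l, hl, ?_⟩
  have : (cs.rightInvSeq ω).getD l 1 = t := by
    rw [List.getD_eq_getElem _ 1 (by rw [cs.length_rightInvSeq]; exact hl)]
    exact hget
  rw [← this]
  exact cs.wordProd_mul_getD_rightInvSeq ω l

theorem exists_eraseIdx_of_isRightDescent (ω : List B) {a : B}
    (h : cs.IsRightDescent (cs.wordProd ω) a) :
    ∃ l < ω.length, cs.wordProd ω * cs.simple a = cs.wordProd (ω.eraseIdx l) :=
  exists_eraseIdx_of_isRightInversion cs ω ⟨cs.isReflection_simple a, h⟩

/-- Deletion property: every word contains a reduced word for the same element. -/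
theorem exists_reduced_subword : ∀ (n : ℕ) (δ : List B), δ.length ≤ n →
    ∃ ρ : List B, cs.IsReduced ρ ∧ cs.wordProd ρ = cs.wordProd δ ∧ ∀ x ∈ ρ, x ∈ δ := by
  intro n
  induction n with
  | zero =>
    intro δ hlen
    rw [Nat.le_zero, List.length_eq_zero_iff] at hlen
    subst hlen
    exact ⟨[], by simp [CoxeterSystem.IsReduced], rfl, by simp⟩
  | succ n ih =>
    intro δ hlen
    by_cases hred : cs.IsReduced δ
    · exact ⟨δ, hred, rfl, fun x hx => hx⟩
    · have hδne : δ ≠ [] := by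
        rintro rfl
        exact hred (by simp [CoxeterSystem.IsReduced])
      have hδlen : 1 ≤ δ.length := by
        cases δ with
        | nil => exact absurd rfl hδne
        | cons a l => simp
      have hex : ∃ j, ¬ cs.IsReduced (δ.take (j + 1)) := by
        refine ⟨δ.length - 1, ?_⟩
        rw [Nat.sub_add_cancel hδlen, List.take_length]
        exact hred
      set j := Nat.find hex with hjdef
      have hj : ¬ cs.IsReduced (δ.take (j + 1)) := Nat.find_spec hex
      have hjle : j ≤ δ.length - 1 := Nat.find_le (by
        rw [Nat.sub_add_cancel hδlen, List.take_length]; exact hred)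
      have hjlt : j < δ.length := by omega
      have hjred : cs.IsReduced (δ.take j) := by
        cases hj' : j with
        | zero => simp [CoxeterSystem.IsReduced]
        | succ j' =>
          have := Nat.find_min hex (m := j') (by omega)
          rwa [not_not] at this
      set b := δ[j] with hbdef
      have htake : δ.take j ++ [b] = δ.take (j + 1) := List.take_concat_get' δ j hjlt
      have hπtake : cs.wordProd (δ.take (j + 1)) = cs.wordProd (δ.take j) * cs.simple b := by
        rw [← htake, cs.wordProd_append, cs.wordProd_singleton]
      have hlentake : cs.length (cs.wordProd (δ.take j)) = j := by
        rw [hjred]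
        have : (δ.take j).length = min j δ.length := List.length_take
        omega
      have hdesc : cs.IsRightDescent (cs.wordProd (δ.take j)) b := by
        have hne := cs.length_mul_simple_ne (cs.wordProd (δ.take j)) b
        rcases cs.length_mul_simple (cs.wordProd (δ.take j)) b with hc | hc
        · exfalso
          apply hj
          show cs.length (cs.wordProd (δ.take (j+1))) = (δ.take (j+1)).length
          rw [hπtake, hc, hlentake, List.length_take]
          omega
        · show cs.length _ < cs.length _
          omega
      obtain ⟨l, hl, hexch⟩ := exists_eraseIdx_of_isRightDescent cs (δ.take j) hdesc
      set δ' := (δ.take j).eraseIdx l ++ δ.drop (j + 1) with hδ'def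
      have hπδ' : cs.wordProd δ' = cs.wordProd δ := by
        rw [hδ'def, cs.wordProd_append, ← hexch, ← hπtake]
        rw [← cs.wordProd_append, List.take_append_drop]
      have hlenδ' : δ'.length ≤ n := by
        have e1 : ((δ.take j).eraseIdx l).length = (δ.take j).length - 1 := by
          rw [List.length_eraseIdx, if_pos hl]
        have e2 : (δ.take j).length = j := by
          have : (δ.take j).length = min j δ.length := List.length_take
          omega
        rw [hδ'def, List.length_append, e1, e2, List.length_drop]
        omega
      obtain ⟨ρ, hρred, hρπ, hρmem⟩ := ih δ' hlenδ'
      refine ⟨ρ, hρred, by rw [hρπ, hπδ'], fun x hx => ?_⟩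
      have hx' := hρmem x hx
      rw [hδ'def, List.mem_append] at hx'
      rcases hx' with hx' | hx'
      · exact (List.take_sublist j δ).mem ((List.eraseIdx_sublist _ l).mem hx')
      · exact (List.drop_sublist (j+1) δ).mem hx'

/-- Every right descent appears (up to `simple`) among the letters of any word. -/
theorem exists_letter_of_isRightDescent (ω : List B) {a : B}
    (h : cs.IsRightDescent (cs.wordProd ω) a) :
    ∃ c ∈ ω, cs.simple c = cs.simple a := by
  have hmem : cs.simple a ∈ cs.rightInvSeq ω :=
    mem_rightInvSeq_of_isRightInversion cs ⟨cs.isReflection_simple a, h⟩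
  obtain ⟨l, hl, hget⟩ := List.mem_iff_getElem.mp hmem
  rw [cs.length_rightInvSeq] at hl
  have hgetD : (cs.rightInvSeq ω).getD l 1 = cs.simple a := by
    rw [List.getD_eq_getElem _ 1 (by rw [cs.length_rightInvSeq]; exact hl)]
    exact hget
  rw [cs.getD_rightInvSeq] at hgetD
  have hget? : ω[l]? = some ω[l] := by
    exact List.getElem?_eq_getElem hl
  rw [hget?] at hgetD
  simp only [Option.map_some, Option.getD_some] at hgetD
  -- simple a = (π (drop (l+1) ω))⁻¹ * simple ω[l] * π (drop (l+1) ω)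
  set q := cs.wordProd (ω.drop (l + 1)) with hq
  set ζ := (ω.drop (l + 1)).reverse ++ ω[l] :: ω.drop (l + 1) with hζ
  have hπζ : cs.wordProd ζ = cs.simple a := by
    rw [hζ, cs.wordProd_append, cs.wordProd_cons, cs.wordProd_reverse, ← hq, ← mul_assoc]
    exact hgetD
  obtain ⟨ρ, hρred, hρπ, hρmem⟩ := exists_reduced_subword cs ζ.length ζ le_rfl
  rw [hπζ] at hρπ
  have hρlen : ρ.length = 1 := by
    have := hρred
    rw [CoxeterSystem.IsReduced, hρπ, cs.length_simple] at this
    omega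
  obtain ⟨c, rfl⟩ := List.length_eq_one_iff.mp hρlen
  refine ⟨c, ?_, by simpa using hρπ⟩
  have hcζ : c ∈ ζ := hρmem c (by simp)
  rw [hζ, List.mem_append, List.mem_reverse] at hcζ
  rcases hcζ with hc | hc
  · exact (List.drop_sublist (l+1) ω).mem hc
  · rcases List.mem_cons.mp hc with hc | hc
    · subst hc; exact List.getElem_mem hl
    · exact (List.drop_sublist (l+1) ω).mem hc

/-- Support invariance: every letter of a reduced word appears (up to `simple`)
in any other reduced word for the same element. -/
theorem support_invariance : ∀ (n : ℕ) (ω ω' : List B), ω.length ≤ n →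
    cs.IsReduced ω → cs.IsReduced ω' → cs.wordProd ω = cs.wordProd ω' →
    ∀ i ∈ ω, ∃ c ∈ ω', cs.simple c = cs.simple i := by
  intro n
  induction n with
  | zero =>
    intro ω ω' hlen _ _ _ i hi
    rw [Nat.le_zero, List.length_eq_zero_iff] at hlen
    subst hlen
    simp at hi
  | succ n ih =>
    intro ω ω' hlen hred hred' heq i hi
    rcases List.eq_nil_or_concat' ω with rfl | ⟨ρ, a, rfl⟩
    · simp at hi
    · have hπ : cs.wordProd (ρ ++ [a]) = cs.wordProd ρ * cs.simple a := by
        rw [cs.wordProd_append, cs.wordProd_singleton]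
      have hlρ : cs.length (cs.wordProd (ρ ++ [a])) = ρ.length + 1 := by
        rw [hred]; simp
      have hπρ : cs.wordProd (ρ ++ [a]) * cs.simple a = cs.wordProd ρ := by
        rw [hπ, mul_assoc]; simp
      have hdesc : cs.IsRightDescent (cs.wordProd (ρ ++ [a])) a := by
        show cs.length _ < cs.length _
        rw [hπρ, hlρ]
        have := cs.length_wordProd_le ρ
        omega
      rcases List.mem_append.mp hi with hiρ | hia
      · -- i is a letter of ρ; use the exchange property on ω'
        have hdesc' : cs.IsRightDescent (cs.wordProd ω') a := heq ▸ hdesc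
        obtain ⟨l, hl, hexch⟩ := exists_eraseIdx_of_isRightDescent cs ω' hdesc'
        have hπe : cs.wordProd (ω'.eraseIdx l) = cs.wordProd ρ := by
          rw [← hexch, ← heq, hπρ]
        have hρred : cs.IsReduced ρ := by
          show cs.length (cs.wordProd ρ) = ρ.length
          have h1 : cs.length (cs.wordProd ρ) ≤ ρ.length := cs.length_wordProd_le ρ
          have h2 : cs.length (cs.wordProd (ρ ++ [a]))
              ≤ cs.length (cs.wordProd ρ) + 1 := by
            rw [hπ]
            rcases cs.length_mul_simple (cs.wordProd ρ) a with hc | hc <;> omega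
          omega
        have heraseRed : cs.IsReduced (ω'.eraseIdx l) := by
          show cs.length (cs.wordProd (ω'.eraseIdx l)) = (ω'.eraseIdx l).length
          rw [hπe, hρred, List.length_eraseIdx]
          simp only [hl, if_true]
          have : ω'.length = cs.length (cs.wordProd ω') := hred'.symm
          rw [this, ← heq, hlρ]
          have : cs.length (cs.wordProd ρ) = ρ.length := hρred
          omega
        have hlen' : ρ.length ≤ n := by
          rw [List.length_append] at hlen
          simp at hlen
          omega
        obtain ⟨c, hc, hcs⟩ := ih ρ (ω'.eraseIdx l) hlen' hρred heraseRed hπe.symm i hiρ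
        exact ⟨c, (List.eraseIdx_sublist ω' l).mem hc, hcs⟩
      · -- i = a is the final letter, a right descent
        have hia' : i = a := by simpa using hia
        subst hia'
        have hdesc' : cs.IsRightDescent (cs.wordProd ω') i := heq ▸ hdesc
        exact exists_letter_of_isRightDescent cs ω' hdesc'

/-- The lifting lemma. -/
theorem lifting {p : W} {iB jB : B}
    (h1 : cs.length (p * cs.simple iB) = cs.length p + 1)
    (h2 : cs.length (cs.simple jB * p) = cs.length p + 1)
    (h3 : cs.length (cs.simple jB * p * cs.simple iB) = cs.length p) :
    cs.simple jB * p = p * cs.simple iB := by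
  obtain ⟨δ, hδred, hδπ⟩ := cs.exists_reduced_word' p
  have hδlen : δ.length = cs.length p := by rw [← hδred, ← hδπ]
  set ω₀ := jB :: δ with hω₀
  have hπω₀ : cs.wordProd ω₀ = cs.simple jB * p := by
    rw [hω₀, cs.wordProd_cons, ← hδπ]
  have hdesc : cs.IsRightDescent (cs.wordProd ω₀) iB := by
    show cs.length _ < cs.length _
    rw [hπω₀, h3, h2]
    omega
  obtain ⟨l, hl, hexch⟩ := exists_eraseIdx_of_isRightDescent cs ω₀ hdesc
  rw [hπω₀] at hexch
  cases l with
  | zero =>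
    rw [hω₀] at hexch
    simp only [List.eraseIdx_cons_zero] at hexch
    calc cs.simple jB * p = (cs.simple jB * p * cs.simple iB) * cs.simple iB := by
          simp [mul_assoc]
      _ = cs.wordProd δ * cs.simple iB := by rw [hexch]
      _ = p * cs.simple iB := by rw [← hδπ]
  | succ l' =>
    exfalso
    rw [hω₀] at hexch
    simp only [List.eraseIdx_cons_succ] at hexch
    rw [cs.wordProd_cons] at hexch
    have hcancel : p * cs.simple iB = cs.wordProd (δ.eraseIdx l') := by
      calc p * cs.simple iB = cs.simple jB * (cs.simple jB * p * cs.simple iB) := by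
            simp [mul_assoc]
        _ = cs.simple jB * (cs.simple jB * cs.wordProd (δ.eraseIdx l')) := by rw [hexch]
        _ = cs.wordProd (δ.eraseIdx l') := by simp
    have hlen1 : cs.length (p * cs.simple iB) ≤ (δ.eraseIdx l').length := by
      rw [hcancel]
      exact cs.length_wordProd_le _
    rw [List.length_eraseIdx] at hlen1
    rw [hω₀] at hl
    simp at hl
    simp only [hl, if_true] at hlen1
    omega
end


section Main

open Classical List
variable {B W : Type*} [Group W] {M : CoxeterMatrix B} (cs : CoxeterSystem M W)

lemma weakLE_trans {a b c : W} (h1 : weakLE cs a b) (h2 : weakLE cs b c) :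
    weakLE cs a c := by
  unfold weakLE at *
  have t0 : a⁻¹ * b * (b⁻¹ * c) = a⁻¹ * c := by simp [mul_assoc]
  have t1 : cs.length (a⁻¹ * c) ≤ cs.length (a⁻¹ * b) + cs.length (b⁻¹ * c) := by
    rw [← t0]
    exact cs.length_mul_le _ _
  have t2 : cs.length c ≤ cs.length a + cs.length (a⁻¹ * c) := by
    have t3 : a * (a⁻¹ * c) = c := by simp
    have := cs.length_mul_le a (a⁻¹ * c)
    rw [t3] at this
    exact this
  omega

lemma weakLE_antisymm {a b : W} (h1 : weakLE cs a b) (h2 : weakLE cs b a) :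
    a = b := by
  unfold weakLE at *
  have t1 : cs.length (a⁻¹ * b) = 0 := by
    have t0 : a⁻¹ * b * (b⁻¹ * a) = 1 := by simp [mul_assoc]
    have := cs.length_mul_le (a⁻¹ * b) (b⁻¹ * a)
    rw [t0, cs.length_one] at this
    omega
  rw [cs.length_eq_zero_iff] at t1
  have := inv_mul_eq_one.mp t1
  exact this.symm ▸ rfl

end Main
end CoxAux

/-- If `[v, w]` is a Boolean interval in the right weak order, then
`supp(v⁻¹w) ∩ Des(v) = ∅`: no generator appearing in some reduced word for `v⁻¹w` is a
right descent of `v`. -/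
theorem support_inter_descents_eq_empty {B W : Type*} [Group W] {M : CoxeterMatrix B}
    (cs : CoxeterSystem M W) (v w : W) (k : ℕ) (h : IsBooleanInterval cs k v w) :
    ∀ i : B, (∃ ω : List B, cs.IsReduced ω ∧ cs.wordProd ω = v⁻¹ * w ∧ i ∈ ω) →
      ¬ cs.IsRightDescent v i := by
  classical
  obtain ⟨hvw, f, hf⟩ := h
  rintro i ⟨ω, hωred, hωπ, hiω⟩ hdes
  -- Notation
  obtain ⟨ν, hνred, hνπ⟩ := cs.exists_reduced_word' v
  have hνlen : ν.length = cs.length v := by rw [← hνred, ← hνπ]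
  have hωlen : ω.length = cs.length (v⁻¹ * w) := by rw [← hωred, hωπ]
  have hvu : v * (v⁻¹ * w) = w := by simp
  have hνω_red : cs.IsReduced (ν ++ ω) := by
    show cs.length (cs.wordProd (ν ++ ω)) = (ν ++ ω).length
    rw [cs.wordProd_append, ← hνπ, hωπ, hvu, List.length_append, hνlen, hωlen]
    exact hvw.symm
  -- Chain elements x m = v * π(ω.take m) lie in the interval.
  have htake_eq : ∀ m : ℕ, (ν ++ ω).take (ν.length + m) = ν ++ ω.take m := by
    intro m
    rw [List.take_append, List.take_of_length_le (by omega)]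
    congr 2
    omega
  have hlen_vp : ∀ m : ℕ, cs.length (v * cs.wordProd (ω.take m))
      = cs.length v + (ω.take m).length := by
    intro m
    have h1 : cs.IsReduced (ν ++ ω.take m) := by
      rw [← htake_eq m]
      exact hνω_red.take _
    have h2 : cs.wordProd (ν ++ ω.take m) = v * cs.wordProd (ω.take m) := by
      rw [cs.wordProd_append, ← hνπ]
    have h3 := h1
    rw [CoxeterSystem.IsReduced, h2, List.length_append, hνlen] at h3
    exact h3
  have hlen_p : ∀ m : ℕ, cs.length (cs.wordProd (ω.take m)) = (ω.take m).length :=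
    fun m => hωred.take m
  have hWLE_vx : ∀ m : ℕ, weakLE cs v (v * cs.wordProd (ω.take m)) := by
    intro m
    show cs.length v + cs.length (v⁻¹ * (v * cs.wordProd (ω.take m))) = _
    rw [inv_mul_cancel_left, hlen_p, hlen_vp]
  have hWLE_xw : ∀ m : ℕ, weakLE cs (v * cs.wordProd (ω.take m)) w := by
    intro m
    show cs.length _ + cs.length ((v * cs.wordProd (ω.take m))⁻¹ * w) = cs.length w
    have hsplit : cs.wordProd (ω.take m) * cs.wordProd (ω.drop m) = v⁻¹ * w := by
      rw [← cs.wordProd_append, List.take_append_drop, hωπ]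
    have hinv : (v * cs.wordProd (ω.take m))⁻¹ * w = cs.wordProd (ω.drop m) := by
      rw [mul_inv_rev, mul_assoc, ← hsplit, inv_mul_cancel_left]
    rw [hinv, hlen_vp, hωred.drop m]
    have h4 : (ω.take m).length + (ω.drop m).length = ω.length := by
      rw [← List.length_append, List.take_append_drop]
    rw [← hvw, ← hωlen]
    omega
  -- The subtype elements of the chain.
  have hvI : weakLE cs v v ∧ weakLE cs v w := by
    constructor
    · show cs.length v + cs.length (v⁻¹ * v) = cs.length v
      simp
    · exact hvw
  -- f sends v to ∅
  have hfv : f ⟨v, hvI⟩ = ∅ := by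
    set z := f.symm ∅ with hz
    have hz1 : f z = ∅ := by rw [hz, Equiv.apply_symm_apply]
    have hz2 : weakLE cs z.1 v := by
      rw [hf z ⟨v, hvI⟩]
      rw [hz1]
      exact Finset.empty_subset _
    have hz3 : z.1 = v := CoxAux.weakLE_antisymm cs hz2 z.2.1
    have : z = ⟨v, hvI⟩ := Subtype.ext hz3
    rw [← this, hz1]
  -- Main induction: a reduced word for each chain prefix, made of non-descent letters.
  have key : ∀ m : ℕ, m ≤ ω.length → ∃ ρ : List B, ρ.length = m ∧
      cs.wordProd ρ = cs.wordProd (ω.take m) ∧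
      ∀ b ∈ ρ, cs.length (v * cs.simple b) = cs.length v + 1 := by
    intro m
    induction m with
    | zero => exact fun _ => ⟨[], rfl, by simp, by simp⟩
    | succ m ih =>
      intro hm1
      obtain ⟨ρ, hρlen, hρπ, hρmem⟩ := ih (by omega)
      have hmlt : m < ω.length := by omega
      set a := ω[m] with ha
      have htake1 : ω.take m ++ [a] = ω.take (m + 1) := List.take_concat_get' ω m hmlt
      set p := cs.wordProd (ω.take m) with hp
      set p1 := cs.wordProd (ω.take (m + 1)) with hp1
      have hp1p : p1 = p * cs.simple a := by
        rw [hp1, ← htake1, cs.wordProd_append, cs.wordProd_singleton]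
      have hℓp : cs.length p = m := by
        rw [hp, hlen_p, List.length_take]; omega
      have hℓp1 : cs.length p1 = m + 1 := by
        rw [hp1, hlen_p, List.length_take]; omega
      have hℓx : cs.length (v * p) = cs.length v + m := by
        rw [hp, hlen_vp, List.length_take]; omega
      have hℓx1 : cs.length (v * p1) = cs.length v + (m + 1) := by
        rw [hp1, hlen_vp, List.length_take]; omega
      set X := (⟨v * p, hWLE_vx m, hWLE_xw m⟩ : {x : W // weakLE cs v x ∧ weakLE cs x w}) with hX
      set X1 := (⟨v * p1, hWLE_vx (m + 1), hWLE_xw (m + 1)⟩ : {x : W // weakLE cs v x ∧ weakLE cs x w}) with hX1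
      have hXne : X ≠ X1 := by
        intro hc
        have : v * p = v * p1 := congrArg Subtype.val hc
        have : cs.length (v * p) = cs.length (v * p1) := by rw [this]
        omega
      have hXle : weakLE cs X.1 X1.1 := by
        show cs.length (v * p) + cs.length ((v * p)⁻¹ * (v * p1)) = cs.length (v * p1)
        have e : (v * p)⁻¹ * (v * p1) = cs.simple a := by
          rw [hp1p, mul_inv_rev, mul_assoc, inv_mul_cancel_left, ← mul_assoc,
            inv_mul_cancel, one_mul]
        rw [e, cs.length_simple]
        omega
      have hssub : f X ⊂ f X1 := by
        constructor
        · exact (hf X X1).mp hXle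
        · intro hcon
          exact hXne (f.injective (Finset.Subset.antisymm ((hf X X1).mp hXle) hcon))
      obtain ⟨c, hc1, hc2⟩ := Finset.exists_of_ssubset hssub
      set y := f.symm {c} with hy
      have hfy : f y = {c} := by rw [hy, Equiv.apply_symm_apply]
      have hyle1 : weakLE cs y.1 X1.1 := by
        rw [hf y X1, hfy, Finset.singleton_subset_iff]
        exact hc1
      have hynle : ¬ weakLE cs y.1 X.1 := by
        intro hcon
        rw [hf y X, hfy, Finset.singleton_subset_iff] at hcon
        exact hc2 hcon
      have hyv : y ≠ ⟨v, hvI⟩ := by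
        intro hcon
        rw [hcon, hfv] at hfy
        exact absurd hfy.symm (Finset.singleton_ne_empty c)
      -- structure of the atom y
      set d := v⁻¹ * y.1 with hd
      have hdy : v * d = y.1 := by rw [hd]; simp
      have hℓd : cs.length v + cs.length d = cs.length y.1 := y.2.1
      have hdne : d ≠ 1 := by
        intro hcon
        rw [hcon, mul_one] at hdy
        exact hyv (Subtype.ext hdy.symm)
      obtain ⟨ε, hεred, hεπ⟩ := cs.exists_reduced_word' d
      have hεne : ε ≠ [] := by
        rintro rfl
        rw [cs.wordProd_nil] at hεπ
        exact hdne hεπ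
      obtain ⟨j, ε', rfl⟩ : ∃ j ε', ε = j :: ε' := by
        cases ε with
        | nil => exact absurd rfl hεne
        | cons j ε' => exact ⟨j, ε', rfl⟩
      have hεlen : ε'.length + 1 = cs.length d := by
        have := hεred
        rw [CoxeterSystem.IsReduced, ← hεπ] at this
        simp at this
        omega
      -- v * s j has length ℓ v + 1
      have hνε_red : cs.IsReduced (ν ++ j :: ε') := by
        show cs.length (cs.wordProd (ν ++ j :: ε')) = _
        rw [cs.wordProd_append, ← hνπ, ← hεπ, hdy, List.length_append, hνlen]
        rw [← hℓd]
        congr 1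
        simp
        omega
      have hvj : cs.length (v * cs.simple j) = cs.length v + 1 := by
        have h1 : cs.IsReduced ((ν ++ j :: ε').take (ν.length + 1)) :=
          hνε_red.take _
        have h2 : (ν ++ j :: ε').take (ν.length + 1) = ν ++ [j] := by
          rw [List.take_append, List.take_of_length_le (by omega)]
          congr 1
          have : ν.length + 1 - ν.length = 1 := by omega
          rw [this]
          rfl
        rw [h2] at h1
        have h3 := h1
        rw [CoxeterSystem.IsReduced, cs.wordProd_append, ← hνπ, cs.wordProd_singleton,
          List.length_append, hνlen] at h3
        rw [h3]
        rfl
      -- y.1 = v * s j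
      have hsjd : cs.simple j * d = cs.wordProd ε' := by
        rw [hεπ, cs.wordProd_cons, ← mul_assoc, cs.simple_mul_simple_self, one_mul]
      have hwle_vy' : weakLE cs v (v * cs.simple j) := by
        show cs.length v + cs.length (v⁻¹ * (v * cs.simple j)) = _
        rw [inv_mul_cancel_left, cs.length_simple, hvj]
      have hwle_y'y : weakLE cs (v * cs.simple j) y.1 := by
        show cs.length (v * cs.simple j) + cs.length ((v * cs.simple j)⁻¹ * y.1) = _
        have e : (v * cs.simple j)⁻¹ * y.1 = cs.simple j * d := by
          rw [mul_inv_rev, cs.inv_simple, mul_assoc, ← hd]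
        rw [e, hsjd, hvj]
        have hε'len : cs.length (cs.wordProd ε') = ε'.length := by
          have := (hεred.drop 1).eq
          simpa using this
        rw [hε'len]
        omega
      have hwle_y'w : weakLE cs (v * cs.simple j) w := CoxAux.weakLE_trans cs hwle_y'y y.2.2
      set Y' := (⟨v * cs.simple j, hwle_vy', hwle_y'w⟩ : {x : W // weakLE cs v x ∧ weakLE cs x w}) with hY'
      have hfY' : f Y' ⊆ {c} := by
        rw [← hfy]
        exact (hf Y' y).mp hwle_y'y
      have hY'y : y.1 = v * cs.simple j := by
        rcases Finset.subset_singleton_iff.mp hfY' with hcase | hcase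
        · exfalso
          rw [← hfv] at hcase
          have : Y' = ⟨v, hvI⟩ := f.injective hcase
          have h5 : v * cs.simple j = v := congrArg Subtype.val this
          have h6 : cs.simple j = 1 := by
            have := congrArg (fun x => v⁻¹ * x) h5
            simpa using this
          have := cs.length_simple j
          rw [h6, cs.length_one] at this
          omega
        · rw [← hfy] at hcase
          exact (congrArg Subtype.val (f.injective hcase)).symm
      -- length computations for the lifting lemma
      have hℓy : cs.length y.1 = cs.length v + 1 := by rw [hY'y, hvj]
      have hsjp1 : cs.length (cs.simple j * p1) = m := by
        have h7 := hyle1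
        unfold weakLE at h7
        have e : y.1⁻¹ * X1.1 = cs.simple j * p1 := by
          show y.1⁻¹ * (v * p1) = _
          rw [hY'y, mul_inv_rev, cs.inv_simple, mul_assoc, inv_mul_cancel_left]
        have e2 : X1.1 = v * p1 := rfl
        rw [e, hℓy, e2] at h7
        show cs.length (cs.simple j * p1) = m
        omega
      have hsjp : cs.length (cs.simple j * p) = m + 1 := by
        have h8 : cs.length (cs.simple j * p) ≠ m - 1 ∨ m = 0 := by
          by_cases hm0 : m = 0
          · right; exact hm0
          · left
            intro hcon
            apply hynle
            show cs.length y.1 + cs.length (y.1⁻¹ * X.1) = cs.length X.1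
            have e : y.1⁻¹ * X.1 = cs.simple j * p := by
              show y.1⁻¹ * (v * p) = _
              rw [hY'y, mul_inv_rev, cs.inv_simple, mul_assoc, inv_mul_cancel_left]
            rw [e, hℓy, hcon]
            show cs.length v + 1 + (m - 1) = cs.length (v * p)
            rw [hℓx]
            omega
        rcases cs.length_simple_mul p j with hc' | hc'
        · rw [hc', hℓp]
        · exfalso
          rw [hℓp] at hc'
          rcases h8 with h8 | h8
          · omega
          · -- m = 0 : p = 1, ℓ (s j * p) = 1 ≠ -1; contradiction with hc'
            subst h8
            omega
      -- lifting
      have hlift : cs.simple j * p = p * cs.simple a := by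
        apply CoxAux.lifting cs
        · rw [hℓp, ← hp1p, hℓp1]
        · rw [hℓp, hsjp]
        · rw [hℓp, mul_assoc, ← hp1p, hsjp1]
      refine ⟨j :: ρ, by simp [hρlen], ?_, ?_⟩
      · rw [cs.wordProd_cons, hρπ, hlift, ← hp1p]
      · intro b hb
        rcases List.mem_cons.mp hb with hb | hb
        · subst hb; exact hvj
        · exact hρmem b hb
  -- conclude
  obtain ⟨ρ, hρlen, hρπ, hρmem⟩ := key ω.length le_rfl
  rw [List.take_length] at hρπ
  have hρred : cs.IsReduced ρ := by
    show cs.length (cs.wordProd ρ) = ρ.length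
    rw [hρπ, hωred, hρlen]
  obtain ⟨c, hcρ, hcs⟩ := CoxAux.support_invariance cs ω.length ω ρ le_rfl hωred hρred hρπ.symm i hiω
  have := hρmem c hcρ
  rw [hcs] at this
  have hlt : cs.length (v * cs.simple i) < cs.length v := hdes
  omega
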